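/- With the optimal allocation, the LP's total earnings exceed pure staking earnings r_s*W by sum_{i=1}^n TVL_i*(sqrt(r_i(0)) - sqrt(r_s))^2 ≥ 0, with equality if and only if r_i(0) = r_s for all i. -/

import Mathlib

lemma key_aux (r rs T : ℝ) (hT : 0 < T) (hrs : 0 < rs) (hr : rs ≤ r) :
    r * T * (T * (Real.sqrt (r / rs) - 1)) / (T + T * (Real.sqrt (r / rs) - 1))
      - rs * (T * (Real.sqrt (r / rs) - 1)) = T * (Real.sqrt r - Real.sqrt rs) ^ 2 := by
  have hr0 : 0 < r := lt_of_lt_of_le hrs hr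
  have hsrs : 0 < Real.sqrt rs := Real.sqrt_pos.mpr hrs
  have hsr : 0 < Real.sqrt r := Real.sqrt_pos.mpr hr0
  have hdiv : Real.sqrt (r / rs) = Real.sqrt r / Real.sqrt rs := Real.sqrt_div hr0.le rs
  have h1 : Real.sqrt r * Real.sqrt r = r := Real.mul_self_sqrt hr0.le
  have h2 : Real.sqrt rs * Real.sqrt rs = rs := Real.mul_self_sqrt hrs.le
  rw [hdiv]
  have hden : T + T * (Real.sqrt r / Real.sqrt rs - 1) = T * Real.sqrt r / Real.sqrt rs := by
    field_simp; ring
  rw [hden]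
  have hTsr : T * Real.sqrt r ≠ 0 := by positivity
  field_simp
  linear_combination (Real.sqrt r * (Real.sqrt r - Real.sqrt rs)) * h2 - (Real.sqrt rs * (Real.sqrt r - Real.sqrt rs)) * h1

/-- The optimal earnings exceed pure staking `rs*W` by
`∑ TVLᵢ*(√(rᵢ(0)) - √rs)² ≥ 0`, with equality iff `rᵢ(0) = rs` for all `i`. -/
theorem stmt_12 (n : ℕ) (f rs W : ℝ) (Vol TVL : Fin n → ℝ)
    (hf : 0 < f) (hrs : 0 < rs) (hW : 0 < W)
    (hVol : ∀ i, 0 < Vol i) (hTVL : ∀ i, 0 < TVL i)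
    (hge : ∀ i, rs ≤ f * Vol i / TVL i)
    (w : Fin n → ℝ)
    (hw : ∀ i, w i = TVL i * (Real.sqrt ((f * Vol i / TVL i) / rs) - 1))
    (w0 : ℝ) (hw0 : w0 = W - ∑ i, w i) (hw0pos : 0 ≤ w0) :
    rs * w0 + ∑ i, f * Vol i * w i / (TVL i + w i)
      = rs * W + ∑ i, TVL i * (Real.sqrt (f * Vol i / TVL i) - Real.sqrt rs) ^ 2 ∧
    0 ≤ ∑ i, TVL i * (Real.sqrt (f * Vol i / TVL i) - Real.sqrt rs) ^ 2 ∧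
    ((∑ i, TVL i * (Real.sqrt (f * Vol i / TVL i) - Real.sqrt rs) ^ 2) = 0
      ↔ ∀ i, f * Vol i / TVL i = rs) := by
  have hterm : ∀ i, f * Vol i * w i / (TVL i + w i) - rs * w i
      = TVL i * (Real.sqrt (f * Vol i / TVL i) - Real.sqrt rs) ^ 2 := by
    intro i
    set r := f * Vol i / TVL i with hr
    have hfv : f * Vol i = r * TVL i := (div_mul_cancel₀ _ (hTVL i).ne').symm
    rw [hw i, ← hr, hfv]
    exact key_aux r rs (TVL i) (hTVL i) hrs (hge i)
  have hnonneg : ∀ i ∈ Finset.univ, (0:ℝ) ≤ TVL i * (Real.sqrt (f * Vol i / TVL i) - Real.sqrt rs) ^ 2 :=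
    fun i _ => mul_nonneg (hTVL i).le (sq_nonneg _)
  refine ⟨?_, Finset.sum_nonneg hnonneg, ?_⟩
  · have hsum : ∑ i, (f * Vol i * w i / (TVL i + w i) - rs * w i)
        = ∑ i, TVL i * (Real.sqrt (f * Vol i / TVL i) - Real.sqrt rs) ^ 2 :=
      Finset.sum_congr rfl fun i _ => hterm i
    rw [Finset.sum_sub_distrib, ← Finset.mul_sum] at hsum
    rw [hw0]
    linarith
  · rw [Finset.sum_eq_zero_iff_of_nonneg hnonneg]
    constructor
    · intro h i
      have := h i (Finset.mem_univ i)
      have hsq : (Real.sqrt (f * Vol i / TVL i) - Real.sqrt rs) ^ 2 = 0 := by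
        rcases mul_eq_zero.mp this with h' | h'
        · exact absurd h' (hTVL i).ne'
        · exact h'
      have hr0 : 0 < f * Vol i / TVL i := lt_of_lt_of_le hrs (hge i)
      exact (Real.sqrt_inj hr0.le hrs.le).mp (sub_eq_zero.mp (sq_eq_zero_iff.mp hsq))
    · intro h i _
      rw [h i, sub_self, zero_pow two_ne_zero, mul_zero]
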